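/- arXiv:math/0608790 — 2 statements merged into one kernel-verified Lean document; each statement's English description precedes it below -/
import Mathlib

section
/- Let E be a finite nonempty set, K a finite set of keys with |K| = |E|, each key k acting as a bijection of E, used with uniform probability 1/|K|, and assume that for every pair (x, y) ∈ E × E there is exactly one key k with k(x) = y. Then for any probability distribution on plaintexts E, the ciphertext distribution is uniform on E, and the conditional probability of any plaintext x given any ciphertext y equals the prior probability of x (perfect secrecy). -/
/-- Shannon's theorem, latin-square case. Let `E` be a finite nonempty set of
plaintexts/ciphertexts, `K` a finite set of keys acting as bijections of `E`
with `|K| = |E|`, each key used with uniform probability `1/|K|`, and suppose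
that for every `(x, y)` there is exactly one key carrying `x` to `y`.
Then for every plaintext distribution `p` the ciphertext distribution is
uniform on `E`, and the conditional probability of any plaintext `x` given any
ciphertext `y` equals the prior `p x` (perfect secrecy). -/
theorem latin_square_perfect_secrecy
    (E K : Type*) [Fintype E] [Fintype K] [Nonempty E] [DecidableEq E]
    (act : K → Equiv.Perm E)
    (hcard : Fintype.card K = Fintype.card E)
    (hlatin : ∀ x y : E, ∃! k : K, act k x = y)
    (p : E → ℝ) (hp0 : ∀ x, 0 ≤ p x) (hp1 : ∑ x, p x = 1) :
    (∀ y : E,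
      (∑ k : K, ∑ x : E, if act k x = y then (1 / (Fintype.card K : ℝ)) * p x else 0)
        = 1 / (Fintype.card E : ℝ)) ∧
    (∀ x y : E,
      (∑ k : K, if act k x = y then (1 / (Fintype.card K : ℝ)) * p x else 0) /
      (∑ k : K, ∑ x' : E, if act k x' = y then (1 / (Fintype.card K : ℝ)) * p x' else 0)
        = p x) := by
  have hE : (0 : ℝ) < Fintype.card E := by
    exact_mod_cast Fintype.card_pos
  have hK : (Fintype.card K : ℝ) = (Fintype.card E : ℝ) := by exact_mod_cast hcard
  have hnum : ∀ x y : E,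
      (∑ k : K, if act k x = y then (1 / (Fintype.card K : ℝ)) * p x else 0)
        = (1 / (Fintype.card K : ℝ)) * p x := by
    intro x y
    obtain ⟨k₀, hk₀, huniq⟩ := hlatin x y
    rw [Finset.sum_eq_single k₀]
    · simp [hk₀]
    · intro k _ hk
      simp only [ite_eq_right_iff]
      intro h
      exact absurd (huniq k h) hk
    · intro h; exact absurd (Finset.mem_univ k₀) h
  have hden : ∀ y : E,
      (∑ k : K, ∑ x : E, if act k x = y then (1 / (Fintype.card K : ℝ)) * p x else 0)
        = 1 / (Fintype.card E : ℝ) := by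
    intro y
    rw [Finset.sum_comm]
    calc (∑ x : E, ∑ k : K, if act k x = y then (1 / (Fintype.card K : ℝ)) * p x else 0)
        = ∑ x : E, (1 / (Fintype.card K : ℝ)) * p x := by
          exact Finset.sum_congr rfl fun x _ => hnum x y
      _ = (1 / (Fintype.card K : ℝ)) * ∑ x : E, p x := by rw [Finset.mul_sum]
      _ = 1 / (Fintype.card E : ℝ) := by rw [hp1, hK, mul_one]
  refine ⟨hden, fun x y => ?_⟩
  rw [hden y, hnum x y, hK]
  field_simp
end

section
/- Suppose along a path (i_1,...,i_n) there is perfect secrecy and the final ciphertext probability p_{C} is positive for every ciphertext C. Then for every choice of plaintexts P_{i_1} ∈ E_{i_1}, ..., P_{i_{n−1}} ∈ E_{i_{n−1}} and every ciphertext C, there exist keys u_{i_2 i_1}, ..., u_{i_n i_{n−1}} at each node carrying P_{i_p} to P_{i_{p+1}} (and P_{i_{n−1}} to C). Consequently, the number of keys available at each node is at least |E|, the common cardinality of the plaintext sets. -/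
/-- If a path of `m` encryption links has perfect secrecy (the probability of the
final ciphertext `C` given any tuple of intermediate plaintexts equals the
unconditional probability of `C`) and every ciphertext has positive probability,
then for every choice of plaintexts `xs : Fin m → E` and every ciphertext `C`
there exist keys at each node carrying each plaintext to the next one (and the
last plaintext to `C`); consequently the number of keys available at each node
is at least `|E|`, the common cardinality of the plaintext sets. -/
theorem perfect_secrecy_key_existence
    (m : ℕ) (hm : 1 ≤ m) (E : Type*) [Fintype E] [DecidableEq E] [Nonempty E]
    (K : ℕ → Type*) [∀ p, Fintype (K p)]
    (pl : ℕ → E → ℝ) (d : ∀ p, K p → ℝ)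
    (hpl0 : ∀ p x, 0 ≤ pl p x) (hpl1 : ∀ p, ∑ x, pl p x = 1)
    (hd0 : ∀ p k, 0 ≤ d p k) (hd1 : ∀ p, ∑ k, d p k = 1)
    (act : ∀ p, K p → Equiv.Perm E)
    -- perfect secrecy of the path:  P(C | tuple) = P(C) for every tuple and `C`
    (hsecrecy : ∀ (xs : Fin m → E) (C : E),
      (∏ p : Fin m, ∑ k, if act p k (xs p) =
          (if h : (p : ℕ) + 1 < m then xs ⟨p + 1, h⟩ else C) then d p k else 0)
      = ∑ ys : Fin m → E, (∏ p : Fin m, pl p (ys p)) *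
          ∏ p : Fin m, ∑ k, if act p k (ys p) =
            (if h : (p : ℕ) + 1 < m then ys ⟨p + 1, h⟩ else C) then d p k else 0)
    -- every ciphertext has positive probability
    (hpos : ∀ C : E,
      0 < ∑ ys : Fin m → E, (∏ p : Fin m, pl p (ys p)) *
            ∏ p : Fin m, ∑ k, if act p k (ys p) =
              (if h : (p : ℕ) + 1 < m then ys ⟨p + 1, h⟩ else C) then d p k else 0) :
    (∀ (xs : Fin m → E) (C : E), ∀ p : Fin m, ∃ k : K p,
        act p k (xs p) = (if h : (p : ℕ) + 1 < m then xs ⟨p + 1, h⟩ else C)) ∧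
    (∀ p : Fin m, Fintype.card E ≤ Fintype.card (K p)) := by
  have key : ∀ (xs : Fin m → E) (C : E), ∀ p : Fin m, ∃ k : K p,
      act p k (xs p) = (if h : (p : ℕ) + 1 < m then xs ⟨p + 1, h⟩ else C) := by
    intro xs C p
    have hprod : 0 < ∏ q : Fin m, ∑ k, if act q k (xs q) =
        (if h : (q : ℕ) + 1 < m then xs ⟨q + 1, h⟩ else C) then d q k else 0 := by
      rw [hsecrecy xs C]; exact hpos C
    have hfac : (∑ k, if act p k (xs p) =
        (if h : (p : ℕ) + 1 < m then xs ⟨p + 1, h⟩ else C) then d p k else 0) ≠ 0 := by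
      intro h0
      rw [Finset.prod_eq_zero (Finset.mem_univ p) h0] at hprod
      exact lt_irrefl 0 hprod
    obtain ⟨k, -, hk⟩ := Finset.exists_ne_zero_of_sum_ne_zero hfac
    refine ⟨k, ?_⟩
    by_contra hne
    rw [if_neg hne] at hk
    exact hk rfl
  refine ⟨key, ?_⟩
  intro p
  have x0 : E := Classical.arbitrary E
  have hexists : ∀ y : E, ∃ k : K p, act p k x0 = y := by
    intro y
    obtain ⟨k, hk⟩ := key (fun q => if (q : ℕ) = (p : ℕ) then x0 else y) y p
    refine ⟨k, ?_⟩
    have h1 : (if ((p : ℕ) : ℕ) = (p : ℕ) then x0 else y) = x0 := if_pos rfl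
    have h2 : (if h : (p : ℕ) + 1 < m then
        (if (((⟨p + 1, h⟩ : Fin m) : ℕ) : ℕ) = (p : ℕ) then x0 else y) else y) = y := by
      split_ifs with h h3
      · simp only [Fin.val_mk] at h3; omega
      · rfl
      · rfl
    rw [h1, h2] at hk
    exact hk
  choose f hf using hexists
  have hinj : Function.Injective f := by
    intro a b hab
    rw [← hf a, ← hf b, hab]
  exact Fintype.card_le_of_injective f hinj
end
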